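/- Let M ∈ ℝ^{p × n}, y ∈ ℝ^p, and define F : ℝ^n → ℝ by F(x) = (1/2)‖Mx − y‖₂². Let G : ℝ^n → ℝ ∪ {+∞} be a proper, convex, lower semicontinuous function such that F + G attains its minimum on ℝ^n. Fix μ > 0, s ∈ (0,2), and z₀ ∈ ℝ^n, and suppose sequences (n_k), (z̃_k), (z_k) in ℝ^n satisfy for every k: (i) n_k = (MᵀM + μI)⁻¹ (Mᵀy + μ z_k); (ii) z̃_k is a minimizer of z ↦ (μ/2)‖(2n_k − z_k) − z‖₂² + G(z); and (iii) z_{k+1} = z_k + s (z̃_k − n_k). Then the sequence (n_k) converges to a minimizer of F + G. -/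

import Mathlib

open Matrix Finset Filter Topology

lemma drAux_posdef {p n : ℕ} (M : Matrix (Fin p) (Fin n) ℝ) {μ : ℝ} (hμ : 0 < μ) :
    (Mᵀ * M + μ • (1 : Matrix (Fin n) (Fin n) ℝ)).PosDef := by
  rw [posDef_iff_dotProduct_mulVec]
  constructor
  · ext i j
    simp only [conjTranspose_apply, Matrix.add_apply, Matrix.mul_apply, transpose_apply,
      Matrix.smul_apply, Matrix.one_apply, star_trivial, smul_eq_mul]
    have : (if j = i then (1:ℝ) else 0) = (if i = j then 1 else 0) := by
      simp [eq_comm]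
    rw [this]
    congr 1
    exact Finset.sum_congr rfl fun k _ => mul_comm _ _
  · intro x hx
    have : (Mᵀ * M + μ • (1 : Matrix (Fin n) (Fin n) ℝ)) *ᵥ x
        = Mᵀ *ᵥ (M *ᵥ x) + μ • x := by
      rw [add_mulVec, ← mulVec_mulVec, smul_mulVec, one_mulVec]
    rw [this]
    simp only [star_trivial, dotProduct_add]
    have h1 : x ⬝ᵥ (Mᵀ *ᵥ (M *ᵥ x)) = (M *ᵥ x) ⬝ᵥ (M *ᵥ x) := by
      rw [dotProduct_mulVec, vecMul_transpose]
    have h2 : x ⬝ᵥ (μ • x) = μ * (x ⬝ᵥ x) := by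
      simp [dotProduct, Finset.mul_sum, mul_left_comm]
    rw [h1, h2]
    have hxx : 0 < x ⬝ᵥ x := by
      have : x ⬝ᵥ x = ∑ i, (x i)^2 := by simp [dotProduct, sq]
      rw [this]
      have hne : ∃ i, x i ≠ 0 := by
        by_contra h; push_neg at h; exact hx (funext h)
      obtain ⟨i, hi⟩ := hne
      have : (0:ℝ) < (x i)^2 := by positivity
      exact this.trans_le (Finset.single_le_sum (fun j _ => sq_nonneg (x j)) (Finset.mem_univ i))
    have hMx : 0 ≤ (M *ᵥ x) ⬝ᵥ (M *ᵥ x) := by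
      have : (M *ᵥ x) ⬝ᵥ (M *ᵥ x) = ∑ i, ((M *ᵥ x) i)^2 := by simp [dotProduct, sq]
      rw [this]; positivity
    nlinarith

lemma drAux_subgrad {n : ℕ} (G : (Fin n → ℝ) → EReal)
    (hG_convex : Convex ℝ {q : (Fin n → ℝ) × ℝ | G q.1 ≤ (q.2 : EReal)})
    (φ : (Fin n → ℝ) → ℝ) (u : Fin n → ℝ) (gu : ℝ) (hgu : G u = (gu : EReal))
    (hm : ∀ w, (φ u : EReal) + G u ≤ (φ w : EReal) + G w)
    (z : Fin n → ℝ) (gz : ℝ) (hz : G z ≤ (gz : EReal))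
    (L C : ℝ)
    (hexp : ∀ t : ℝ, 0 < t → t ≤ 1 →
      φ (u + t • (z - u)) ≤ φ u + t * L + t ^ 2 * C) :
    gu ≤ gz + L := by
  have key : ∀ t : ℝ, 0 < t → t ≤ 1 → gu ≤ gz + L + t * C := by
    intro t ht0 ht1
    set zt : Fin n → ℝ := u + t • (z - u) with hzt
    have hmem : G zt ≤ (((1 - t) * gu + t * gz : ℝ) : EReal) := by
      have h1 : (u, gu) ∈ {q : (Fin n → ℝ) × ℝ | G q.1 ≤ (q.2 : EReal)} := le_of_eq hgu
      have h2 : (z, gz) ∈ {q : (Fin n → ℝ) × ℝ | G q.1 ≤ (q.2 : EReal)} := hz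
      have := hG_convex h1 h2 (by linarith : (0:ℝ) ≤ 1 - t) ht0.le (by ring)
      have heq : (1 - t) • (u, gu) + t • (z, gz) = (zt, (1 - t) * gu + t * gz) := by
        refine Prod.ext ?_ ?_
        · funext j
          simp only [Prod.fst_add, Prod.smul_fst, Pi.add_apply, Pi.smul_apply, smul_eq_mul,
            Pi.sub_apply, hzt]
          ring
        · simp [smul_eq_mul]
      rw [heq] at this
      exact this
    have hmz := hm zt
    have hstep : (φ zt : EReal) + G zt ≤ (φ zt : EReal) + (((1 - t) * gu + t * gz : ℝ) : EReal) :=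
      add_le_add le_rfl hmem
    have hreal : φ u + gu ≤ φ zt + ((1 - t) * gu + t * gz) := by
      have : ((φ u + gu : ℝ) : EReal) ≤ ((φ zt + ((1 - t) * gu + t * gz) : ℝ) : EReal) := by
        rw [EReal.coe_add, EReal.coe_add, hgu] at *
        exact le_trans hmz hstep
      exact_mod_cast this
    have hφ := hexp t ht0 ht1
    have : t * gu ≤ t * gz + t * L + t ^ 2 * C := by nlinarith
    have h' : gu ≤ gz + L + t * C := by
      have := mul_le_mul_of_nonneg_left this (le_of_lt (inv_pos.mpr ht0))
      rw [mul_add, mul_add] at this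
      field_simp at this ⊢
      nlinarith [this]
    exact h'
  by_contra hcon
  push_neg at hcon
  set ε := gu - (gz + L) with hε
  have hε0 : 0 < ε := by linarith
  set t := min 1 (ε / (|C| + 1)) with htdef
  have hC1 : 0 < |C| + 1 := by positivity
  have ht0 : 0 < t := lt_min one_pos (div_pos hε0 hC1)
  have ht1 : t ≤ 1 := min_le_left _ _
  have := key t ht0 ht1
  have htC : t * C < ε := by
    have h1 : t ≤ ε / (|C| + 1) := min_le_right _ _
    have h2 : t * C ≤ t * |C| := mul_le_mul_of_nonneg_left (le_abs_self C) ht0.le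
    have h3 : t * |C| ≤ (ε / (|C| + 1)) * |C| :=
      mul_le_mul_of_nonneg_right h1 (abs_nonneg C)
    have h4 : (ε / (|C| + 1)) * |C| < ε := by
      rw [div_mul_eq_mul_div, div_lt_iff₀ hC1]
      nlinarith [abs_nonneg C]
    linarith
  linarith

lemma drAux_SF {p n : ℕ} (M : Matrix (Fin p) (Fin n) ℝ) (y : Fin p → ℝ)
    (F : (Fin n → ℝ) → ℝ)
    (hF : ∀ x, F x = (1 / 2) * ∑ i, (M.mulVec x i - y i) ^ 2)
    (μ : ℝ) (zz uu : Fin n → ℝ)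
    (h : (Mᵀ * M + μ • (1 : Matrix (Fin n) (Fin n) ℝ)).mulVec uu = Mᵀ.mulVec y + μ • zz) :
    ∀ z, μ * ∑ j, (zz j - uu j) * (z j - uu j) ≤ F z - F uu := by
  intro z
  set a : Fin p → ℝ := fun i => M.mulVec uu i - y i with ha
  set b : Fin p → ℝ := fun i => M.mulVec z i - M.mulVec uu i with hb
  have hgrad : ∀ j, μ * (zz j - uu j) = ∑ i, M i j * a i := by
    intro j
    have hj := congrFun h j
    have hrw : (Mᵀ * M + μ • (1 : Matrix (Fin n) (Fin n) ℝ)).mulVec uu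
        = Mᵀ.mulVec (M.mulVec uu) + μ • uu := by
      rw [add_mulVec, ← mulVec_mulVec, smul_mulVec, one_mulVec]
    rw [hrw] at hj
    simp only [Pi.add_apply, Pi.smul_apply, smul_eq_mul, Matrix.mulVec, dotProduct,
      transpose_apply] at hj
    have : ∑ i, M i j * a i = ∑ i, M i j * M.mulVec uu i - ∑ i, M i j * y i := by
      rw [← Finset.sum_sub_distrib]
      exact Finset.sum_congr rfl fun i _ => by simp [ha, Matrix.mulVec, dotProduct]; ring
    rw [this]
    simp only [Matrix.mulVec, dotProduct] at hj ⊢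
    linarith
  have hlhs : μ * ∑ j, (zz j - uu j) * (z j - uu j) = ∑ i, a i * b i := by
    rw [Finset.mul_sum]
    have : ∀ j, μ * ((zz j - uu j) * (z j - uu j)) = ∑ i, (M i j * a i) * (z j - uu j) := by
      intro j
      rw [← Finset.sum_mul, ← hgrad j]; ring
    rw [Finset.sum_congr rfl fun j _ => this j, Finset.sum_comm]
    refine Finset.sum_congr rfl fun i _ => ?_
    have : b i = ∑ j, M i j * (z j - uu j) := by
      simp [hb, Matrix.mulVec, dotProduct, mul_sub, Finset.sum_sub_distrib]
    rw [this, Finset.mul_sum]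
    exact Finset.sum_congr rfl fun j _ => by ring
  have hpt : ∀ i, (M.mulVec z i - y i) ^ 2
      = (M.mulVec uu i - y i) ^ 2 + 2 * (a i * b i) + (b i) ^ 2 := by
    intro i; simp only [ha, hb]; ring
  have hFz : F z = F uu + ∑ i, a i * b i + (1 / 2) * ∑ i, (b i) ^ 2 := by
    rw [hF z, hF uu, Finset.sum_congr rfl fun i _ => hpt i,
      Finset.sum_add_distrib, Finset.sum_add_distrib]
    rw [show ∑ i, 2 * (a i * b i) = 2 * ∑ i, a i * b i from (Finset.mul_sum _ _ _).symm]
    ring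
  have hb2 : 0 ≤ ∑ i, (b i) ^ 2 := Finset.sum_nonneg fun i _ => sq_nonneg _
  rw [hlhs]
  linarith

lemma drAux_fejer {n : ℕ} {s : ℝ} (hs0 : 0 ≤ s) (z u v zb ub : Fin n → ℝ)
    (SA : ∑ j, ((z j - u j) - (zb j - ub j)) * (ub j - u j) ≤ 0)
    (SB : ∑ j, (((2 * u j - z j) - v j) - (ub j - zb j)) * (ub j - v j) ≤ 0) :
    ∑ j, ((z j + s * (v j - u j)) - zb j) ^ 2
      ≤ ∑ j, (z j - zb j) ^ 2 - s * (2 - s) * ∑ j, (v j - u j) ^ 2 := by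
  have hid : ∑ j, ((z j + s * (v j - u j)) - zb j) ^ 2
      = ∑ j, (z j - zb j) ^ 2 - s * (2 - s) * ∑ j, (v j - u j) ^ 2
        + 2 * s * ((∑ j, ((z j - u j) - (zb j - ub j)) * (ub j - u j))
          + ∑ j, (((2 * u j - z j) - v j) - (ub j - zb j)) * (ub j - v j)) := by
    have hpt : ∀ j : Fin n, ((z j + s * (v j - u j)) - zb j) ^ 2
        = (z j - zb j) ^ 2 - s * (2 - s) * (v j - u j) ^ 2
          + 2 * s * (((z j - u j) - (zb j - ub j)) * (ub j - u j)
            + (((2 * u j - z j) - v j) - (ub j - zb j)) * (ub j - v j)) := by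
      intro j; ring
    rw [Finset.sum_congr rfl fun j _ => hpt j]
    simp only [Finset.sum_add_distrib, Finset.sum_sub_distrib, ← Finset.mul_sum]
  have hnp : 2 * s * ((∑ j, ((z j - u j) - (zb j - ub j)) * (ub j - u j))
      + ∑ j, (((2 * u j - z j) - v j) - (ub j - zb j)) * (ub j - v j)) ≤ 0 :=
    mul_nonpos_of_nonneg_of_nonpos (by positivity) (by linarith)
  linarith [hid, hnp]

/-- If the sum of squared coordinate differences tends to 0, then f tends to g. -/
lemma drAux_tendsto_of_l2 {n : ℕ} (f : ℕ → (Fin n → ℝ)) (g : Fin n → ℝ)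
    (h : Tendsto (fun k => ∑ j, (f k j - g j) ^ 2) atTop (𝓝 0)) :
    Tendsto f atTop (𝓝 g) := by
  rw [tendsto_pi_nhds]
  intro j
  have hsq : Tendsto (fun k => (f k j - g j) ^ 2) atTop (𝓝 0) := by
    refine squeeze_zero (g := fun k => ∑ i, (f k i - g i) ^ 2) (fun k => sq_nonneg _)
      (fun k => Finset.single_le_sum (fun i (_ : i ∈ Finset.univ) => sq_nonneg (f k i - g i))
        (Finset.mem_univ j)) h
  have habs : Tendsto (fun k => |f k j - g j|) atTop (𝓝 0) := by
    have := hsq.sqrt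
    simp only [Real.sqrt_zero] at this
    refine this.congr fun k => ?_
    rw [Real.sqrt_sq_eq_abs]
  have hdiff : Tendsto (fun k => f k j - g j) atTop (𝓝 0) := by
    exact tendsto_zero_iff_abs_tendsto_zero _ |>.mpr habs
  have := hdiff.add_const (g j)
  simpa using this

lemma drAux_l2_of_tendsto {n : ℕ} (f : ℕ → (Fin n → ℝ)) (g : Fin n → ℝ)
    (h : Tendsto f atTop (𝓝 g)) :
    Tendsto (fun k => ∑ j, (f k j - g j) ^ 2) atTop (𝓝 0) := by
  rw [tendsto_pi_nhds] at h
  have : Tendsto (fun k => ∑ j, (f k j - g j) ^ 2) atTop (𝓝 (∑ j : Fin n, (g j - g j) ^ 2)) := by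
    refine tendsto_finset_sum _ fun j _ => ?_
    exact (((h j).sub_const (g j)).pow 2)
  simpa using this

lemma drAux_transp {p n : ℕ} (M : Matrix (Fin p) (Fin n) ℝ) (w : Fin p → ℝ) (v : Fin n → ℝ) :
    ∑ j, Mᵀ.mulVec w j * v j = ∑ i, w i * M.mulVec v i := by
  simp only [Matrix.mulVec, dotProduct, transpose_apply, Finset.sum_mul, Finset.mul_sum]
  rw [Finset.sum_comm]
  exact Finset.sum_congr rfl fun i _ => Finset.sum_congr rfl fun j _ => by ring

lemma drAux_Fexp {p n : ℕ} (M : Matrix (Fin p) (Fin n) ℝ) (y : Fin p → ℝ)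
    (F : (Fin n → ℝ) → ℝ)
    (hF : ∀ x, F x = (1 / 2) * ∑ i, (M.mulVec x i - y i) ^ 2)
    (u w : Fin n → ℝ) (t : ℝ) :
    F (u + t • w) = F u + t * ∑ i, (M.mulVec u i - y i) * M.mulVec w i
      + t ^ 2 * ((1 / 2) * ∑ i, (M.mulVec w i) ^ 2) := by
  rw [hF, hF]
  have hpt : ∀ i, (M.mulVec (u + t • w) i - y i) ^ 2
      = (M.mulVec u i - y i) ^ 2 + 2 * (t * ((M.mulVec u i - y i) * M.mulVec w i))
        + t ^ 2 * (M.mulVec w i) ^ 2 := by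
    intro i
    have : M.mulVec (u + t • w) i = M.mulVec u i + t * M.mulVec w i := by
      rw [mulVec_add, mulVec_smul]; simp
    rw [this]; ring
  rw [Finset.sum_congr rfl fun i _ => hpt i, Finset.sum_add_distrib, Finset.sum_add_distrib,
    ← Finset.mul_sum, ← Finset.mul_sum, ← Finset.mul_sum]
  ring
/-- Subgradient inequality from the prox minimality property for G. -/
lemma drAux_SG {n : ℕ} (G : (Fin n → ℝ) → EReal)
    (hG_convex : Convex ℝ {q : (Fin n → ℝ) × ℝ | G q.1 ≤ (q.2 : EReal)})
    {μ : ℝ} (hμ : 0 < μ) (a u : Fin n → ℝ) (gu : ℝ) (hgu : G u = (gu : EReal))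
    (hm : ∀ w, (((μ / 2) * ∑ j, (a j - u j) ^ 2 : ℝ) : EReal) + G u
      ≤ (((μ / 2) * ∑ j, (a j - w j) ^ 2 : ℝ) : EReal) + G w)
    (z : Fin n → ℝ) (gz : ℝ) (hz : G z ≤ (gz : EReal)) :
    gu + μ * ∑ j, (a j - u j) * (z j - u j) ≤ gz := by
  have := drAux_subgrad G hG_convex (fun w => (μ / 2) * ∑ j, (a j - w j) ^ 2) u gu hgu
    hm z gz hz (- (μ * ∑ j, (a j - u j) * (z j - u j))) ((μ / 2) * ∑ j, (z j - u j) ^ 2) ?_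
  · linarith
  · intro t ht0 ht1
    have hpt : ∀ j : Fin n, (a j - (u + t • (z - u)) j) ^ 2
        = (a j - u j) ^ 2 - 2 * (t * ((a j - u j) * (z j - u j))) + t ^ 2 * (z j - u j) ^ 2 := by
      intro j
      simp only [Pi.add_apply, Pi.smul_apply, Pi.sub_apply, smul_eq_mul]
      ring
    have : (μ / 2) * ∑ j, (a j - (u + t • (z - u)) j) ^ 2
        = (μ / 2) * ∑ j, (a j - u j) ^ 2
          + t * (- (μ * ∑ j, (a j - u j) * (z j - u j)))
          + t ^ 2 * ((μ / 2) * ∑ j, (z j - u j) ^ 2) := by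
      rw [Finset.sum_congr rfl fun j _ => hpt j, Finset.sum_add_distrib,
        Finset.sum_sub_distrib, ← Finset.mul_sum, ← Finset.mul_sum, ← Finset.mul_sum]
      ring
    exact le_of_eq this
/-- At a minimizer of F + G, minus the gradient of F is a subgradient of G. -/
lemma drAux_SGstar {p n : ℕ} (M : Matrix (Fin p) (Fin n) ℝ) (y : Fin p → ℝ)
    (F : (Fin n → ℝ) → ℝ)
    (hF : ∀ x, F x = (1 / 2) * ∑ i, (M.mulVec x i - y i) ^ 2)
    (G : (Fin n → ℝ) → EReal)
    (hG_convex : Convex ℝ {q : (Fin n → ℝ) × ℝ | G q.1 ≤ (q.2 : EReal)})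
    (xs : Fin n → ℝ) (gxs : ℝ) (hgxs : G xs = (gxs : EReal))
    (hmin : ∀ x, (F xs : EReal) + G xs ≤ (F x : EReal) + G x)
    (z : Fin n → ℝ) (gz : ℝ) (hz : G z ≤ (gz : EReal)) :
    gxs ≤ gz + ∑ j, Mᵀ.mulVec (M.mulVec xs - y) j * (z j - xs j) := by
  have htr : ∑ j, Mᵀ.mulVec (M.mulVec xs - y) j * (z j - xs j)
      = ∑ i, (M.mulVec xs i - y i) * M.mulVec (z - xs) i := by
    have := drAux_transp M (M.mulVec xs - y) (z - xs)
    simpa using this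
  rw [htr]
  refine drAux_subgrad G hG_convex F xs gxs hgxs hmin z gz hz
    (∑ i, (M.mulVec xs i - y i) * M.mulVec (z - xs) i)
    ((1 / 2) * ∑ i, (M.mulVec (z - xs) i) ^ 2) ?_
  intro t ht0 ht1
  exact le_of_eq (drAux_Fexp M y F hF xs (z - xs) t)

lemma drAux_ne_top {a b : EReal} (c1 c2 : ℝ) (h : (c1 : EReal) + a ≤ (c2 : EReal) + b)
    (hb : b ≠ ⊤) : a ≠ ⊤ := by
  intro h'
  rw [h', EReal.add_top_of_ne_bot (EReal.coe_ne_bot c1)] at h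
  exact absurd (top_le_iff.mp h) (EReal.add_lt_top (EReal.coe_ne_top c2) hb).ne


/-- Convergence of the (relaxed) Douglas–Rachford splitting algorithm applied to
`F + G`, where `F(x) = (1/2)‖Mx − y‖₂²` and `G : ℝⁿ → ℝ ∪ {+∞}` is proper, convex and
lower semicontinuous, assuming `F + G` attains its minimum. The iteration is
`n_k = (MᵀM + μI)⁻¹(Mᵀy + μ z_k)`, `z̃_k ∈ argmin_z (μ/2)‖(2n_k − z_k) − z‖₂² + G(z)`,
`z_{k+1} = z_k + s(z̃_k − n_k)` with `μ > 0` and relaxation parameter `s ∈ (0,2)`.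
Then `(n_k)` converges to a minimizer of `F + G`. -/
theorem douglasRachford_converges_to_minimizer (p n : ℕ)
    (M : Matrix (Fin p) (Fin n) ℝ) (y : Fin p → ℝ)
    (F : (Fin n → ℝ) → ℝ)
    (hF : ∀ x, F x = (1 / 2) * ∑ i, (M.mulVec x i - y i) ^ 2)
    (G : (Fin n → ℝ) → EReal)
    (hG_ne_bot : ∀ x, G x ≠ ⊥)
    (hG_proper : ∃ x, G x ≠ ⊤)
    (hG_convex : Convex ℝ {q : (Fin n → ℝ) × ℝ | G q.1 ≤ (q.2 : EReal)})
    (hG_lsc : LowerSemicontinuous G)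
    (hmin : ∃ xstar : Fin n → ℝ, ∀ x, (F xstar : EReal) + G xstar ≤ (F x : EReal) + G x)
    (μ s : ℝ) (hμ : 0 < μ) (hs0 : 0 < s) (hs2 : s < 2)
    (nk ztilde zk : ℕ → (Fin n → ℝ))
    (h1 : ∀ k, nk k = (Mᵀ * M + μ • (1 : Matrix (Fin n) (Fin n) ℝ))⁻¹.mulVec
        (Mᵀ.mulVec y + μ • zk k))
    (h2 : ∀ k, ∀ z : Fin n → ℝ,
        ((μ / 2) * ∑ j, ((2 • nk k - zk k) j - ztilde k j) ^ 2 : ℝ) + G (ztilde k) ≤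
        ((μ / 2) * ∑ j, ((2 • nk k - zk k) j - z j) ^ 2 : ℝ) + G z)
    (h3 : ∀ k, zk (k + 1) = zk k + s • (ztilde k - nk k)) :
    ∃ nlim : Fin n → ℝ,
      Tendsto nk atTop (𝓝 nlim) ∧
      ∀ x, (F nlim : EReal) + G nlim ≤ (F x : EReal) + G x := by
  classical
  obtain ⟨x0, hx0⟩ := hG_proper
  obtain ⟨xs, hxs⟩ := hmin
  set A : Matrix (Fin n) (Fin n) ℝ := Mᵀ * M + μ • (1 : Matrix (Fin n) (Fin n) ℝ) with hAdef
  -- invertibility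
  have hPD := drAux_posdef M hμ
  have hdet : IsUnit A.det := (Matrix.isUnit_iff_isUnit_det A).mp hPD.isUnit
  have hAinv : ∀ v, A.mulVec (A⁻¹.mulVec v) = v := by
    intro v; rw [mulVec_mulVec, Matrix.mul_nonsing_inv _ hdet, one_mulVec]
  have hAn : ∀ k, A.mulVec (nk k) = Mᵀ.mulVec y + μ • zk k := fun k => by
    rw [h1 k]; exact hAinv _
  -- F subgradient inequalities for the iterates
  have SF : ∀ k z, μ * ∑ j, (zk k j - nk k j) * (z j - nk k j) ≤ F z - F (nk k) :=
    fun k => drAux_SF M y F hF μ (zk k) (nk k) (hAn k)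
  -- pointwise value of 2 • x
  have h2s : ∀ (x : Fin n → ℝ) (j : Fin n), (2 • x) j = 2 * x j := by
    intro x j; simp [Pi.smul_apply]
  -- finiteness of G at the prox points
  have hfin : ∀ k, ∃ r : ℝ, G (ztilde k) = (r : EReal) := by
    intro k
    have hne := drAux_ne_top _ _ (h2 k x0) hx0
    exact ⟨(G (ztilde k)).toReal, (EReal.coe_toReal hne (hG_ne_bot _)).symm⟩
  choose gv hgv using hfin
  -- G subgradient inequalities at the prox points
  have SGk : ∀ k z (gz : ℝ), G z ≤ (gz : EReal) →
      gv k + μ * ∑ j, ((2 • nk k - zk k) j - ztilde k j) * (z j - ztilde k j) ≤ gz :=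
    fun k z gz hzz => drAux_SG G hG_convex hμ (2 • nk k - zk k) (ztilde k) (gv k)
      (hgv k) (h2 k) z gz hzz
  -- finiteness of G at xs
  have hgxs_ne : G xs ≠ ⊤ := drAux_ne_top (F xs) (F x0) (hxs x0) hx0
  set gxs : ℝ := (G xs).toReal with hgxsdef
  have hgxs : G xs = (gxs : EReal) := (EReal.coe_toReal hgxs_ne (hG_ne_bot _)).symm
  -- the fixed point z*
  set grad : Fin n → ℝ := Mᵀ.mulVec (M.mulVec xs - y) with hgraddef
  set zstar : Fin n → ℝ := xs + μ⁻¹ • grad with hzstardef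
  have hAxs : A.mulVec xs = Mᵀ.mulVec y + μ • zstar := by
    funext j
    have hArw : A.mulVec xs = Mᵀ.mulVec (M.mulVec xs) + μ • xs := by
      rw [hAdef, add_mulVec, ← mulVec_mulVec, smul_mulVec, one_mulVec]
    have hgj : grad j = Mᵀ.mulVec (M.mulVec xs) j - Mᵀ.mulVec y j := by
      rw [hgraddef, mulVec_sub]; simp
    rw [hArw]
    simp only [Pi.add_apply, Pi.smul_apply, smul_eq_mul, hzstardef, Pi.add_apply,
      Pi.smul_apply, smul_eq_mul]
    rw [hgj]
    field_simp
    ring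
  have SFstar : ∀ z, μ * ∑ j, (zstar j - xs j) * (z j - xs j) ≤ F z - F xs :=
    drAux_SF M y F hF μ zstar xs hAxs
  have SGstar : ∀ z (gz : ℝ), G z ≤ (gz : EReal) →
      gxs + μ * ∑ j, (xs j - zstar j) * (z j - xs j) ≤ gz := by
    intro z gz hzz
    have h := drAux_SGstar M y F hF G hG_convex xs gxs hgxs hxs z gz hzz
    have hsum : μ * ∑ j, (xs j - zstar j) * (z j - xs j)
        = -∑ j, grad j * (z j - xs j) := by
      rw [Finset.mul_sum, ← Finset.sum_neg_distrib]
      refine Finset.sum_congr rfl fun j _ => ?_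
      have : xs j - zstar j = -(μ⁻¹ * grad j) := by
        rw [hzstardef]; simp only [Pi.add_apply, Pi.smul_apply, smul_eq_mul]; ring
      rw [this]
      field_simp
    rw [hsum]
    rw [← hgraddef] at h
    linarith
  -- the Fejér step for a general fixed pair
  have fejer_pair : ∀ (zb ub : Fin n → ℝ) (gub : ℝ), G ub = (gub : EReal) →
      (∀ z, μ * ∑ j, (zb j - ub j) * (z j - ub j) ≤ F z - F ub) →
      (∀ z (gz : ℝ), G z ≤ (gz : EReal) →
        gub + μ * ∑ j, (ub j - zb j) * (z j - ub j) ≤ gz) →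
      ∀ k, ∑ j, (zk (k+1) j - zb j) ^ 2
        ≤ ∑ j, (zk k j - zb j) ^ 2 - s * (2 - s) * ∑ j, (ztilde k j - nk k j) ^ 2 := by
    intro zb ub gub hgub hSFp hSGp k
    have a1 := SF k ub
    have a2 := hSFp (nk k)
    have SA : ∑ j, ((zk k j - nk k j) - (zb j - ub j)) * (ub j - nk k j) ≤ 0 := by
      have hsplit : ∑ j, ((zk k j - nk k j) - (zb j - ub j)) * (ub j - nk k j)
          = (∑ j, (zk k j - nk k j) * (ub j - nk k j))
            + ∑ j, (zb j - ub j) * (nk k j - ub j) := by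
        rw [← Finset.sum_add_distrib]
        exact Finset.sum_congr rfl fun j _ => by ring
      rw [hsplit]
      nlinarith [a1, a2, hμ]
    have b1 := SGk k ub gub (le_of_eq hgub)
    have b2 := hSGp (ztilde k) (gv k) (le_of_eq (hgv k))
    have SB : ∑ j, (((2 * nk k j - zk k j) - ztilde k j) - (ub j - zb j))
        * (ub j - ztilde k j) ≤ 0 := by
      have hb1 : gv k + μ * ∑ j, ((2 * nk k j - zk k j) - ztilde k j)
          * (ub j - ztilde k j) ≤ gub := by
        have : ∑ j, ((2 • nk k - zk k) j - ztilde k j) * (ub j - ztilde k j)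
            = ∑ j, ((2 * nk k j - zk k j) - ztilde k j) * (ub j - ztilde k j) := by
          refine Finset.sum_congr rfl fun j _ => ?_
          rw [Pi.sub_apply, h2s]
        rw [← this]; exact b1
      have hsplit : ∑ j, (((2 * nk k j - zk k j) - ztilde k j) - (ub j - zb j))
          * (ub j - ztilde k j)
          = (∑ j, ((2 * nk k j - zk k j) - ztilde k j) * (ub j - ztilde k j))
            + ∑ j, (ub j - zb j) * (ztilde k j - ub j) := by
        rw [← Finset.sum_add_distrib]
        exact Finset.sum_congr rfl fun j _ => by ring
      rw [hsplit]
      nlinarith [hb1, b2, hμ]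
    have := drAux_fejer hs0.le (zk k) (nk k) (ztilde k) zb ub SA SB
    have hzk1 : ∀ j, zk (k+1) j = zk k j + s * (ztilde k j - nk k j) := by
      intro j; rw [h3 k]; simp [Pi.add_apply, Pi.smul_apply, Pi.sub_apply, smul_eq_mul]
    calc ∑ j, (zk (k+1) j - zb j) ^ 2
        = ∑ j, ((zk k j + s * (ztilde k j - nk k j)) - zb j) ^ 2 :=
          Finset.sum_congr rfl fun j _ => by rw [hzk1 j]
      _ ≤ _ := this
  -- Fejér monotone w.r.t. z*
  have hc : 0 < s * (2 - s) := by nlinarith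
  set D : ℕ → ℝ := fun k => ∑ j, (ztilde k j - nk k j) ^ 2 with hDdef
  have hD0 : ∀ k, 0 ≤ D k := fun k => Finset.sum_nonneg fun j _ => sq_nonneg _
  set Q : ℕ → ℝ := fun k => ∑ j, (zk k j - zstar j) ^ 2 with hQdef
  have hQ0 : ∀ k, 0 ≤ Q k := fun k => Finset.sum_nonneg fun j _ => sq_nonneg _
  have hfejS : ∀ k, Q (k+1) ≤ Q k - s * (2 - s) * D k :=
    fejer_pair zstar xs gxs hgxs SFstar SGstar
  have htel : ∀ K, Q K + s * (2 - s) * ∑ k ∈ Finset.range K, D k ≤ Q 0 := by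
    intro K
    induction K with
    | zero => simp
    | succ K ih =>
      rw [Finset.sum_range_succ]
      have := hfejS K
      nlinarith [this, ih]
  have hDsum : Summable D := by
    refine summable_of_sum_range_le hD0 (c := Q 0 / (s * (2 - s))) fun K => ?_
    have := htel K
    rw [le_div_iff₀ hc]
    nlinarith [hQ0 K, this]
  have hDtend : Tendsto D atTop (𝓝 0) := hDsum.tendsto_atTop_zero
  have hvu0 : Tendsto (fun k => ztilde k - nk k) atTop (𝓝 0) := by
    refine drAux_tendsto_of_l2 _ _ ?_
    have : ∀ k, ∑ j, ((ztilde k - nk k) j - (0 : Fin n → ℝ) j) ^ 2 = D k := by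
      intro k
      exact Finset.sum_congr rfl fun j _ => by simp [Pi.sub_apply]
    simpa only [this] using hDtend
  -- boundedness and a convergent subsequence
  have hQanti : Antitone Q := antitone_nat_of_succ_le fun k => by
    nlinarith [hfejS k, hD0 k, hc]
  have hball : ∀ k, zk k ∈ Metric.closedBall zstar (Real.sqrt (Q 0)) := by
    intro k
    rw [Metric.mem_closedBall]
    rw [dist_pi_le_iff (Real.sqrt_nonneg _)]
    intro j
    rw [Real.dist_eq]
    have h1 : (zk k j - zstar j) ^ 2 ≤ Q 0 := by
      have := Finset.single_le_sum (f := fun j => (zk k j - zstar j) ^ 2)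
        (fun i _ => sq_nonneg _) (Finset.mem_univ j)
      have h2 := hQanti (Nat.zero_le k)
      calc (zk k j - zstar j) ^ 2 ≤ Q k := this
        _ ≤ Q 0 := h2
    calc |zk k j - zstar j| = Real.sqrt ((zk k j - zstar j) ^ 2) :=
          (Real.sqrt_sq_eq_abs _).symm
      _ ≤ Real.sqrt (Q 0) := Real.sqrt_le_sqrt h1
  obtain ⟨zb, -, φ, hφmono, hzφ⟩ :=
    tendsto_subseq_of_bounded Metric.isBounded_closedBall hball
  -- limit of the shadow sequence
  have hcontPhi : Continuous (fun w : Fin n → ℝ => A⁻¹.mulVec (Mᵀ.mulVec y + μ • w)) := by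
    have hmv : Continuous (fun v : Fin n → ℝ => A⁻¹.mulVec v) := by
      refine continuous_pi fun i => ?_
      simp only [Matrix.mulVec, dotProduct]
      exact continuous_finset_sum _ fun j _ => (continuous_const.mul (continuous_apply j) : Continuous fun v : Fin n → ℝ => A⁻¹ i j * v j)
    exact hmv.comp (continuous_const.add (continuous_id.const_smul μ))
  set ub : Fin n → ℝ := A⁻¹.mulVec (Mᵀ.mulVec y + μ • zb) with hubdef
  have hnφ : Tendsto (fun j => nk (φ j)) atTop (𝓝 ub) := by
    have := (hcontPhi.tendsto zb).comp hzφ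
    exact this.congr fun j => by
      simp only [Function.comp_apply]
      exact (h1 (φ j)).symm
  have hvφ : Tendsto (fun j => ztilde (φ j)) atTop (𝓝 ub) := by
    have h0 : Tendsto (fun j => ztilde (φ j) - nk (φ j)) atTop (𝓝 0) :=
      hvu0.comp hφmono.tendsto_atTop
    have := hnφ.add h0
    rw [add_zero] at this
    exact this.congr fun j => by simp
  have habar : A.mulVec ub = Mᵀ.mulVec y + μ • zb := hAinv _
  have SFbar : ∀ z, μ * ∑ j, (zb j - ub j) * (z j - ub j) ≤ F z - F ub :=
    drAux_SF M y F hF μ zb ub habar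
  -- the limiting G subgradient inequality via lower semicontinuity
  have hGub : ∀ z (gz : ℝ), G z ≤ (gz : EReal) →
      G ub ≤ ((gz - μ * ∑ j, (ub j - zb j) * (z j - ub j) : ℝ) : EReal) := by
    intro z gz hzz
    by_contra hcon
    push_neg at hcon
    obtain ⟨c, hc1, hc2⟩ := EReal.exists_between_coe_real hcon
    have hev1 : ∀ᶠ j in atTop, (c : EReal) < G (ztilde (φ j)) :=
      hvφ.eventually (hG_lsc ub (c : EReal) hc2)
    -- the moving inner-product sums converge
    have hrt : Tendsto (fun j => ∑ j', ((2 • nk (φ j) - zk (φ j)) j' - ztilde (φ j) j')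
        * (z j' - ztilde (φ j) j')) atTop
        (𝓝 (∑ j', (ub j' - zb j') * (z j' - ub j'))) := by
      have hcoord : ∀ j' : Fin n, Tendsto (fun j => ((2 * nk (φ j) j' - zk (φ j) j')
          - ztilde (φ j) j') * (z j' - ztilde (φ j) j')) atTop
          (𝓝 (((2 * ub j' - zb j') - ub j') * (z j' - ub j'))) := by
        intro j'
        have hn' : Tendsto (fun j => nk (φ j) j') atTop (𝓝 (ub j')) :=
          tendsto_pi_nhds.mp hnφ j'
        have hz' : Tendsto (fun j => zk (φ j) j') atTop (𝓝 (zb j')) :=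
          tendsto_pi_nhds.mp hzφ j'
        have hv' : Tendsto (fun j => ztilde (φ j) j') atTop (𝓝 (ub j')) :=
          tendsto_pi_nhds.mp hvφ j'
        exact (((hn'.const_mul 2).sub hz').sub hv').mul (tendsto_const_nhds.sub hv')
      have := tendsto_finset_sum Finset.univ (fun j' (_ : j' ∈ Finset.univ) => hcoord j')
      have heqlim : ∑ j', ((2 * ub j' - zb j') - ub j') * (z j' - ub j')
          = ∑ j', (ub j' - zb j') * (z j' - ub j') :=
        Finset.sum_congr rfl fun j' _ => by ring
      rw [heqlim] at this
      exact this.congr fun j => by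
        refine Finset.sum_congr rfl fun j' _ => ?_
        rw [Pi.sub_apply, h2s]
    have hr : Tendsto (fun j => gz - μ * ∑ j', ((2 • nk (φ j) - zk (φ j)) j'
        - ztilde (φ j) j') * (z j' - ztilde (φ j) j')) atTop
        (𝓝 (gz - μ * ∑ j', (ub j' - zb j') * (z j' - ub j'))) :=
      tendsto_const_nhds.sub (hrt.const_mul μ)
    have hc1' : gz - μ * ∑ j', (ub j' - zb j') * (z j' - ub j') < c := by
      exact_mod_cast hc1
    have hev2 := hr.eventually_lt_const hc1'
    obtain ⟨j, hj1, hj2⟩ := (hev1.and hev2).exists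
    have hgvj : c < gv (φ j) := by
      rw [hgv (φ j)] at hj1
      exact_mod_cast hj1
    have := SGk (φ j) z gz hzz
    linarith
  have hGub_ne : G ub ≠ ⊤ := by
    have := hGub x0 (G x0).toReal (le_of_eq (EReal.coe_toReal hx0 (hG_ne_bot x0)).symm)
    intro h'
    rw [h'] at this
    exact (EReal.coe_ne_top _) (top_le_iff.mp this)
  set gub : ℝ := (G ub).toReal with hgubdef
  have hgub : G ub = (gub : EReal) := (EReal.coe_toReal hGub_ne (hG_ne_bot _)).symm
  have SGbar : ∀ z (gz : ℝ), G z ≤ (gz : EReal) →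
      gub + μ * ∑ j, (ub j - zb j) * (z j - ub j) ≤ gz := by
    intro z gz hzz
    have := hGub z gz hzz
    rw [hgub] at this
    have := EReal.coe_le_coe_iff.mp this
    linarith
  -- the whole sequence converges
  have hfejB : ∀ k, ∑ j, (zk (k+1) j - zb j) ^ 2
      ≤ ∑ j, (zk k j - zb j) ^ 2 - s * (2 - s) * D k :=
    fejer_pair zb ub gub hgub SFbar SGbar
  set Q' : ℕ → ℝ := fun k => ∑ j, (zk k j - zb j) ^ 2 with hQ'def
  have hanti' : Antitone Q' := antitone_nat_of_succ_le fun k => by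
    nlinarith [hfejB k, hD0 k, hc]
  have hbdd : BddBelow (Set.range Q') := by
    refine ⟨0, ?_⟩
    rintro - ⟨k, rfl⟩
    exact Finset.sum_nonneg fun j _ => sq_nonneg _
  have hQ'lim := tendsto_atTop_ciInf hanti' hbdd
  have hQ'φ0 : Tendsto (fun j => Q' (φ j)) atTop (𝓝 0) :=
    drAux_l2_of_tendsto (fun j => zk (φ j)) zb hzφ
  have hiInf : ⨅ k, Q' k = 0 :=
    tendsto_nhds_unique (hQ'lim.comp hφmono.tendsto_atTop) hQ'φ0
  have hQ'0 : Tendsto Q' atTop (𝓝 0) := hiInf ▸ hQ'lim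
  have hzk : Tendsto zk atTop (𝓝 zb) := drAux_tendsto_of_l2 zk zb hQ'0
  have hnk : Tendsto nk atTop (𝓝 ub) := by
    have := (hcontPhi.tendsto zb).comp hzk
    exact this.congr fun k => by
      simp only [Function.comp_apply]
      exact (h1 k).symm
  refine ⟨ub, hnk, ?_⟩
  intro x
  by_cases hx : G x = ⊤
  · rw [hx, EReal.add_top_of_ne_bot (EReal.coe_ne_bot _)]
    exact le_top
  · set gx : ℝ := (G x).toReal with hgxdef
    have hgx : G x = (gx : EReal) := (EReal.coe_toReal hx (hG_ne_bot _)).symm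
    have a1 := SFbar x
    have a2 := SGbar x gx (le_of_eq hgx)
    have hsumneg : ∑ j, (ub j - zb j) * (x j - ub j)
        = -∑ j, (zb j - ub j) * (x j - ub j) := by
      rw [← Finset.sum_neg_distrib]
      exact Finset.sum_congr rfl fun j _ => by ring
    rw [hsumneg] at a2
    have hreal : F ub + gub ≤ F x + gx := by nlinarith [a1, a2, hμ]
    rw [hgub, hgx, ← EReal.coe_add, ← EReal.coe_add]
    exact_mod_cast hreal
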